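/- Let X ~ N_ℤ(0, σ²) be the discrete Gaussian on ℤ. Then Var[X] ≤ σ²(1 − 4π²σ²/(e^{4π²σ²} − 1)) < σ². -/

import Mathlib

open Real

set_option maxHeartbeats 1000000

noncomputable def Dg (t : ℝ) : ℝ := ∑' n : ℤ, Real.exp (-t * (n : ℝ) ^ 2)
noncomputable def Ng (t : ℝ) : ℝ := ∑' n : ℤ, (n : ℝ) ^ 2 * Real.exp (-t * (n : ℝ) ^ 2)

lemma summable_aux {t : ℝ} (ht : 0 < t) (k : ℕ) :
    Summable (fun n : ℤ => |(n : ℝ)| ^ k * Real.exp (-t * (n : ℝ) ^ 2)) := by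
  have h := summable_pow_mul_jacobiTheta₂_term_bound 0 (div_pos ht pi_pos) k
  refine h.congr fun n => ?_
  rw [Int.cast_abs]
  congr 2
  have hπ : (π : ℝ) ≠ 0 := pi_ne_zero
  field_simp
  ring

lemma summable_Dg {t : ℝ} (ht : 0 < t) : Summable (fun n : ℤ => Real.exp (-t * (n : ℝ) ^ 2)) := by
  simpa using summable_aux ht 0

lemma summable_Ng {t : ℝ} (ht : 0 < t) :
    Summable (fun n : ℤ => (n : ℝ) ^ 2 * Real.exp (-t * (n : ℝ) ^ 2)) := by
  simpa [sq_abs] using summable_aux ht 2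

lemma natCast_inj' : Function.Injective (fun n : ℕ => (n : ℤ)) := by
  intro a b h; simpa using h

lemma neg_succ_inj : Function.Injective (fun n : ℕ => (-(n + 1) : ℤ)) := by
  intro a b h
  simp only [neg_inj, add_left_inj] at h
  simpa using h

lemma succ_inj' : Function.Injective (fun n : ℕ => ((n : ℤ) + 1)) := by
  intro a b h
  simp only [add_left_inj] at h
  simpa using h

lemma summable_succ {f : ℤ → ℝ} (hf : Summable f) : Summable (fun n : ℕ => f ((n : ℤ) + 1)) :=
  hf.comp_injective succ_inj'

lemma tsum_int_even {f : ℤ → ℝ} (hf : Summable f) (he : ∀ n : ℤ, f (-n) = f n) :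
    ∑' n : ℤ, f n = f 0 + 2 * ∑' n : ℕ, f ((n : ℤ) + 1) := by
  have h1 : Summable (fun n : ℕ => f (n : ℤ)) := hf.comp_injective natCast_inj'
  have h2 : Summable (fun n : ℕ => f (-((n : ℤ) + 1))) := hf.comp_injective neg_succ_inj
  rw [tsum_of_nat_of_neg_add_one h1 h2, tsum_congr (fun n : ℕ => he ((n : ℤ) + 1)),
    Summable.tsum_eq_zero_add h1]
  have : ∀ n : ℕ, f ((n : ℤ) + 1) = f (((n + 1 : ℕ) : ℤ)) := by intro n; push_cast; ring_nf
  rw [tsum_congr this]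
  push_cast
  ring

lemma Dg_even (t : ℝ) : ∀ n : ℤ, Real.exp (-t * ((-n : ℤ) : ℝ) ^ 2) = Real.exp (-t * (n : ℝ) ^ 2) := by
  intro n; push_cast; ring_nf

lemma Ng_even (t : ℝ) : ∀ n : ℤ,
    ((-n : ℤ) : ℝ) ^ 2 * Real.exp (-t * ((-n : ℤ) : ℝ) ^ 2)
      = (n : ℝ) ^ 2 * Real.exp (-t * (n : ℝ) ^ 2) := by
  intro n; push_cast; ring_nf

lemma Dg_split {t : ℝ} (ht : 0 < t) :
    Dg t = 1 + 2 * ∑' n : ℕ, Real.exp (-t * ((n : ℝ) + 1) ^ 2) := by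
  rw [Dg, tsum_int_even (summable_Dg ht) (Dg_even t)]
  norm_num

lemma Ng_split {t : ℝ} (ht : 0 < t) :
    Ng t = 2 * ∑' n : ℕ, ((n : ℝ) + 1) ^ 2 * Real.exp (-t * ((n : ℝ) + 1) ^ 2) := by
  rw [Ng, tsum_int_even (summable_Ng ht) (Ng_even t)]
  norm_num

lemma Dg_pos {t : ℝ} (ht : 0 < t) : 0 < Dg t := by
  have h := Summable.le_tsum (summable_Dg ht) 0 (fun j _ => (Real.exp_pos _).le)
  simp only [Int.cast_zero, ne_eq] at h
  rw [Dg]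
  nlinarith [Real.exp_pos (-t * (0:ℝ)^2), h]

lemma Dg_one_le {t : ℝ} (ht : 0 < t) : 1 ≤ Dg t := by
  have h := Summable.le_tsum (summable_Dg ht) 0 (fun j _ => (Real.exp_pos _).le)
  simpa [Dg] using h

lemma Ng_nonneg (t : ℝ) : 0 ≤ Ng t :=
  tsum_nonneg fun n => by positivity

lemma summable_Ng_nat {t : ℝ} (ht : 0 < t) :
    Summable (fun n : ℕ => ((n : ℝ) + 1) ^ 2 * Real.exp (-t * ((n : ℝ) + 1) ^ 2)) := by
  refine (summable_succ (summable_Ng ht)).congr fun n => ?_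
  push_cast; ring_nf

lemma summable_Dg_nat {t : ℝ} (ht : 0 < t) :
    Summable (fun n : ℕ => Real.exp (-t * ((n : ℝ) + 1) ^ 2)) := by
  refine (summable_succ (summable_Dg ht)).congr fun n => ?_
  push_cast; ring_nf

lemma Ng_lower {t : ℝ} (ht : 0 < t) : 2 * Real.exp (-t) ≤ Ng t := by
  rw [Ng_split ht]
  have h := Summable.le_tsum (summable_Ng_nat ht) 0
    (fun j _ => by positivity)
  norm_num at h
  simp only [neg_mul]
  linarith [h]

lemma exp_three_ge : (20 : ℝ) ≤ Real.exp 3 := by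
  have h := Real.exp_one_gt_d9
  have h3 : Real.exp 3 = (Real.exp 1) ^ (3 : ℕ) := by
    rw [← Real.exp_nat_mul]; norm_num
  rw [h3]
  calc (20:ℝ) ≤ 2.7182818283 ^ 3 := by norm_num
    _ ≤ (Real.exp 1) ^ 3 := by
        apply pow_le_pow_left₀ (by norm_num) h.le

lemma exp_neg_le {t : ℝ} (ht3 : 3 ≤ t) : Real.exp (-t) ≤ 1 / 20 := by
  have h1 : Real.exp (-t) ≤ Real.exp (-3) := Real.exp_le_exp.mpr (by linarith)
  have h2 : Real.exp (-3) = (Real.exp 3)⁻¹ := by rw [← Real.exp_neg]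
  have h3 := exp_three_ge
  rw [h2] at h1
  have : (Real.exp 3)⁻¹ ≤ 1 / 20 := by
    rw [inv_le_iff_one_le_mul₀ (by positivity)]
    nlinarith
  linarith

lemma summable_geom_nat {t : ℝ} (ht : 0 < t) :
    Summable (fun n : ℕ => Real.exp (-t * ((n : ℝ) + 1))) := by
  have hr : Real.exp (-t) < 1 := Real.exp_lt_one_iff.mpr (by linarith)
  have h : ∀ n : ℕ, Real.exp (-t * ((n : ℝ) + 1)) = Real.exp (-t) ^ (n + 1) := by
    intro n; rw [← Real.exp_nat_mul]; push_cast; ring_nf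
  refine Summable.congr ?_ (fun n => (h n).symm)
  exact ((summable_geometric_of_lt_one (Real.exp_pos _).le hr).mul_right _).congr
    (fun n => by rw [pow_succ])

lemma geom_bound {t : ℝ} (ht3 : 3 ≤ t) :
    ∑' n : ℕ, Real.exp (-t * ((n : ℝ) + 1)) ≤ (20 / 19) * Real.exp (-t) := by
  have ht : (0:ℝ) < t := by linarith
  have hr0 : 0 ≤ Real.exp (-t) := (Real.exp_pos _).le
  have hr : Real.exp (-t) < 1 := Real.exp_lt_one_iff.mpr (by linarith)
  have h : ∀ n : ℕ, Real.exp (-t * ((n : ℝ) + 1)) = Real.exp (-t) ^ n * Real.exp (-t) := by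
    intro n
    rw [← pow_succ, ← Real.exp_nat_mul]; push_cast; ring_nf
  rw [tsum_congr h, tsum_mul_right, tsum_geometric_of_lt_one hr0 hr]
  have h20 := exp_neg_le ht3
  rw [inv_mul_eq_div, div_le_iff₀ (by linarith)]
  nlinarith

lemma Ng_upper {t : ℝ} (ht3 : 3 ≤ t) : Ng t ≤ (40 / 19) * Real.exp (-t) := by
  have ht : (0:ℝ) < t := by linarith
  rw [Ng_split ht]
  have hterm : ∀ n : ℕ, ((n : ℝ) + 1) ^ 2 * Real.exp (-t * ((n : ℝ) + 1) ^ 2)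
      ≤ Real.exp (-t * ((n : ℝ) + 1)) := by
    intro n
    set x : ℝ := (n : ℝ) + 1 with hx
    have hn : (0:ℝ) ≤ (n : ℝ) := Nat.cast_nonneg n
    have hx1 : 1 ≤ x := by rw [hx]; linarith
    have h1 : x ≤ Real.exp (x - 1) := by
      have := Real.add_one_le_exp (x - 1); linarith
    have h2 : x ^ 2 ≤ Real.exp (2 * (x - 1)) := by
      rw [show (2 * (x - 1)) = (x - 1) + (x - 1) by ring, Real.exp_add]
      nlinarith [Real.exp_pos (x - 1)]
    have h3 : Real.exp (2 * (x - 1)) ≤ Real.exp (t * (x ^ 2 - x)) := by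
      apply Real.exp_le_exp.mpr
      have key : 0 ≤ (x - 1) * (t * x - 2) := by
        apply mul_nonneg (by linarith)
        nlinarith
      nlinarith [key]
    calc x ^ 2 * Real.exp (-t * x ^ 2)
        ≤ Real.exp (t * (x ^ 2 - x)) * Real.exp (-t * x ^ 2) := by
          have := (Real.exp_pos (-t * x ^ 2)).le
          nlinarith [h2, h3]
      _ = Real.exp (-t * x) := by rw [← Real.exp_add]; ring_nf
  have hs := Summable.tsum_le_tsum hterm (summable_Ng_nat ht) (summable_geom_nat ht)
  have hg := geom_bound ht3
  linarith

lemma Dg_upper {t : ℝ} (ht3 : 3 ≤ t) : Dg t ≤ 1 + (40 / 19) * Real.exp (-t) := by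
  have ht : (0:ℝ) < t := by linarith
  rw [Dg_split ht]
  have hterm : ∀ n : ℕ, Real.exp (-t * ((n : ℝ) + 1) ^ 2) ≤ Real.exp (-t * ((n : ℝ) + 1)) := by
    intro n
    apply Real.exp_le_exp.mpr
    have hn : (0:ℝ) ≤ (n : ℝ) := Nat.cast_nonneg n
    nlinarith [mul_nonneg ht.le (mul_nonneg hn (by linarith : (0:ℝ) ≤ (n:ℝ) + 1))]
  have hs := Summable.tsum_le_tsum hterm (summable_Dg_nat ht) (summable_geom_nat ht)
  have hg := geom_bound ht3
  linarith

lemma poisson {t : ℝ} (ht : 0 < t) :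
    Dg t = Real.sqrt π * ((Real.sqrt t)⁻¹ * Dg (π ^ 2 * t⁻¹)) := by
  have h := Real.tsum_exp_neg_mul_int_sq (a := t / π) (div_pos ht pi_pos)
  have hπ : (0:ℝ) < π := pi_pos
  have e1 : ∀ n : ℤ, Real.exp (-π * (t / π) * (n : ℝ) ^ 2) = Real.exp (-t * (n : ℝ) ^ 2) := by
    intro n; congr 1; field_simp
  have e2 : ∀ n : ℤ, Real.exp (-π / (t / π) * (n : ℝ) ^ 2)
      = Real.exp (-(π ^ 2 * t⁻¹) * (n : ℝ) ^ 2) := by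
    intro n
    have h' : -π / (t / π) = -(π ^ 2 * t⁻¹) := by field_simp [ht.ne']
    rw [h']
  rw [tsum_congr e1, tsum_congr e2] at h
  rw [Dg, Dg, h]
  have hrp : (t / π) ^ ((1:ℝ) / 2) = Real.sqrt (t / π) := (Real.sqrt_eq_rpow _).symm
  rw [hrp, Real.sqrt_div ht.le, one_div_div]
  have h1 : Real.sqrt t ≠ 0 := (Real.sqrt_pos.mpr ht).ne'
  have h2 : Real.sqrt π ≠ 0 := (Real.sqrt_pos.mpr hπ).ne'
  field_simp

lemma hasDerivAt_Dg {t : ℝ} (ht : 0 < t) : HasDerivAt Dg (-(Ng t)) t := by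
  have hu : Summable (fun n : ℤ => (n:ℝ)^2 * Real.exp (-(t/2) * (n:ℝ)^2)) :=
    summable_Ng (half_pos ht)
  have hderiv : ∀ (n : ℤ) (y : ℝ), y ∈ Set.Ioi (t/2) →
      HasDerivAt (fun z : ℝ => Real.exp (-z * (n:ℝ)^2))
        (-((n:ℝ)^2 * Real.exp (-y * (n:ℝ)^2))) y := by
    intro n y _
    have h1 : HasDerivAt (fun z : ℝ => -z * (n:ℝ)^2) (-(n:ℝ)^2) y := by
      simpa using ((hasDerivAt_id y).neg.mul_const ((n:ℝ)^2))
    have := h1.exp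
    convert this using 1
    ring
  have hbound : ∀ (n : ℤ) (y : ℝ), y ∈ Set.Ioi (t/2) →
      ‖-((n:ℝ)^2 * Real.exp (-y * (n:ℝ)^2))‖ ≤ (n:ℝ)^2 * Real.exp (-(t/2) * (n:ℝ)^2) := by
    intro n y hy
    rw [Set.mem_Ioi] at hy
    rw [norm_neg, Real.norm_of_nonneg (by positivity)]
    have : Real.exp (-y * (n:ℝ)^2) ≤ Real.exp (-(t/2) * (n:ℝ)^2) := by
      apply Real.exp_le_exp.mpr
      nlinarith [sq_nonneg ((n:ℝ))]
    nlinarith [sq_nonneg ((n:ℝ)), Real.exp_pos (-y * (n:ℝ)^2)]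
  have hmem : t ∈ Set.Ioi (t/2) := by rw [Set.mem_Ioi]; linarith
  have key := hasDerivAt_tsum_of_isPreconnected hu (isOpen_Ioi (a := t/2))
    (isPreconnected_Ioi) hderiv hbound hmem (summable_Dg ht) hmem
  have : ∑' n : ℤ, -((n:ℝ)^2 * Real.exp (-t * (n:ℝ)^2)) = -(Ng t) := by
    rw [tsum_neg, Ng]
  rw [this] at key
  exact key

lemma Ng_ratio {t : ℝ} (ht : 0 < t) :
    Ng t / Dg t = 1 / (2*t) - π^2 / t^2 * (Ng (π^2 * t⁻¹) / Dg (π^2 * t⁻¹)) := by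
  have hπ : (0:ℝ) < π := pi_pos
  have hs : 0 < π^2 * t⁻¹ := by positivity
  have hst : 0 < Real.sqrt t := Real.sqrt_pos.mpr ht
  have hsπ : 0 < Real.sqrt π := Real.sqrt_pos.mpr hπ
  have hA : 0 < Dg (π^2 * t⁻¹) := Dg_pos hs
  -- derivative of the left side
  have hD : HasDerivAt Dg (-(Ng t)) t := hasDerivAt_Dg ht
  -- derivative of the Poisson side
  have hsq : HasDerivAt Real.sqrt (1 / (2 * Real.sqrt t)) t := Real.hasDerivAt_sqrt ht.ne'
  have hinv1 : HasDerivAt (fun y : ℝ => (Real.sqrt y)⁻¹)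
      (-(1 / (2 * Real.sqrt t)) / Real.sqrt t ^ 2) t := hsq.inv hst.ne'
  have hinner : HasDerivAt (fun y : ℝ => π^2 * y⁻¹) (π^2 * -(t^2)⁻¹) t :=
    (hasDerivAt_inv ht.ne').const_mul (π^2)
  have hDs : HasDerivAt Dg (-(Ng (π^2 * t⁻¹))) (π^2 * t⁻¹) := hasDerivAt_Dg hs
  have hcomp : HasDerivAt (fun y : ℝ => Dg (π^2 * y⁻¹))
      (-(Ng (π^2 * t⁻¹)) * (π^2 * -(t^2)⁻¹)) t := by have := hDs.comp t hinner; exact this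
  have hmul := hinv1.mul hcomp
  have hG := hmul.const_mul (Real.sqrt π)
  have hEq : Dg =ᶠ[nhds t] (fun y => Real.sqrt π * ((Real.sqrt y)⁻¹ * Dg (π^2 * y⁻¹))) := by
    filter_upwards [Ioi_mem_nhds ht] with y hy
    exact poisson hy
  have hD2 := hG.congr_of_eventuallyEq hEq
  have huniq := hD.unique hD2
  have hDt : Dg t = Real.sqrt π * ((Real.sqrt t)⁻¹ * Dg (π^2 * t⁻¹)) := poisson ht
  set A := Dg (π^2 * t⁻¹) with hAdef
  set B := Ng (π^2 * t⁻¹) with hBdef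
  set st := Real.sqrt t with hstdef
  set sπ := Real.sqrt π with hsπdef
  have hst2 : st ^ 2 = t := Real.sq_sqrt ht.le
  have hNt : Ng t = -(sπ * (-(1 / (2 * st)) / st ^ 2 * A + st⁻¹ * (-B * (π^2 * -(t^2)⁻¹)))) := by
    rw [← huniq]; ring
  have hππ : π ^ 2 = sπ ^ 2 * sπ ^ 2 := by
    rw [hsπdef, Real.sq_sqrt hπ.le]; ring
  rw [hNt, hDt, hππ, ← hst2]
  field_simp
  ring

lemma pi_sq_gt : (9.8 : ℝ) < π ^ 2 := by
  have h := Real.pi_gt_d6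
  nlinarith

lemma direct_upper {t : ℝ} (ht3 : 3 ≤ t) :
    Ng t / Dg t ≤ 1 / (2*t) * (1 - (2*π^2/t) / (Real.exp (2*π^2/t) - 1)) := by
  have ht : (0:ℝ) < t := by linarith
  have hπ2 := pi_sq_gt
  set x : ℝ := 2*π^2/t with hxdef
  have hx : 0 < x := by positivity
  -- exp x - 1 ≥ x + x^2/2
  have htay := Real.sum_le_exp_of_nonneg hx.le 3
  have hser : 1 + x + x^2/2 ≤ Real.exp x := by
    have : ∑ i ∈ Finset.range 3, x ^ i / (Nat.factorial i) = 1 + x + x^2/2 := by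
      norm_num [Finset.sum_range_succ, Nat.factorial]
    linarith [htay, this.symm.le]
  have hE : 0 < Real.exp x - 1 := by nlinarith
  -- x / (exp x - 1) ≤ 2 / (2 + x)
  have hfrac : x / (Real.exp x - 1) ≤ 2 / (2 + x) := by
    rw [div_le_div_iff₀ hE (by linarith)]
    nlinarith
  -- so 1 - x/(exp x -1) ≥ x/(2+x) = π²/(t+π²)
  have hbnd : π^2 / (t + π^2) ≤ 1 - x / (Real.exp x - 1) := by
    have h1 : x / (2 + x) ≤ 1 - x / (Real.exp x - 1) := by
      have : x / (2+x) + 2/(2+x) = 1 := by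
        rw [← add_div, div_eq_one_iff_eq (by linarith)]
        ring
      linarith
    have h2 : π^2 / (t + π^2) = x / (2 + x) := by
      rw [hxdef, div_eq_div_iff (by nlinarith) (by positivity)]
      field_simp
    linarith [h2.le, h1]
  -- R ≤ Ng t ≤ (40/19) e^{-t}
  have hR : Ng t / Dg t ≤ (40/19) * Real.exp (-t) := by
    have h1 : Ng t / Dg t ≤ Ng t := div_le_self (Ng_nonneg t) (Dg_one_le ht)
    linarith [Ng_upper ht3]
  -- numeric: (40/19) e^{-t} ≤ 1/(2t) * (π²/(t+π²))
  have hnum : (40/19) * Real.exp (-t) ≤ 1 / (2*t) * (π^2 / (t + π^2)) := by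
    have hmono : (9.8:ℝ) / (t + 9.8) ≤ π^2 / (t + π^2) := by
      rw [div_le_div_iff₀ (by linarith) (by nlinarith)]
      nlinarith
    have htay5 := Real.sum_le_exp_of_nonneg (by linarith : (0:ℝ) ≤ t) 6
    have hp : 1 + t + t^2/2 + t^3/6 + t^4/24 + t^5/120 ≤ Real.exp t := by
      have : ∑ i ∈ Finset.range 6, t ^ i / (Nat.factorial i)
          = 1 + t + t^2/2 + t^3/6 + t^4/24 + t^5/120 := by
        norm_num [Finset.sum_range_succ, Nat.factorial]
      linarith [htay5, this.symm.le]
    have hkey : (40/19) * Real.exp (-t) ≤ 1/(2*t) * (9.8 / (t + 9.8)) := by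
      have e1 : (40/19) * Real.exp (-t) = 40/(19 * Real.exp t) := by
        rw [Real.exp_neg]
        field_simp
      have e2 : 1/(2*t) * ((9.8:ℝ)/(t+9.8)) = 9.8/(2*t*(t+9.8)) := by
        field_simp
      rw [e1, e2, div_le_div_iff₀ (by positivity) (by positivity)]
      nlinarith [hp, sq_nonneg (t-3), mul_nonneg (mul_nonneg (by linarith : (0:ℝ) ≤ t - 3)
        (by linarith : (0:ℝ) ≤ t - 3)) (by linarith : (0:ℝ) ≤ t),
        mul_nonneg (mul_nonneg (mul_nonneg (by linarith : (0:ℝ) ≤ t - 3)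
        (by linarith : (0:ℝ) ≤ t - 3)) (by linarith : (0:ℝ) ≤ t)) (by linarith : (0:ℝ) ≤ t)]
    have hpos : 0 ≤ 1/(2*t) := by positivity
    calc (40/19) * Real.exp (-t) ≤ 1/(2*t) * (9.8/(t+9.8)) := hkey
      _ ≤ 1/(2*t) * (π^2/(t+π^2)) := by
          apply mul_le_mul_of_nonneg_left hmono hpos
  calc Ng t / Dg t ≤ (40/19) * Real.exp (-t) := hR
    _ ≤ 1/(2*t) * (π^2/(t+π^2)) := hnum
    _ ≤ 1/(2*t) * (1 - x / (Real.exp x - 1)) := by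
        apply mul_le_mul_of_nonneg_left hbnd (by positivity)

lemma direct_lower {s : ℝ} (hs3 : 3 ≤ s) :
    1 / (Real.exp (2*s) - 1) ≤ Ng s / Dg s := by
  have hs : (0:ℝ) < s := by linarith
  have he20 : (20:ℝ) ≤ Real.exp s := le_trans exp_three_ge (Real.exp_le_exp.mpr hs3)
  have hei : Real.exp (-s) ≤ 1/20 := exp_neg_le hs3
  have heipos : 0 < Real.exp (-s) := Real.exp_pos _
  have hE : 0 < Real.exp (2*s) - 1 := by
    have : (1:ℝ) < Real.exp (2*s) := Real.one_lt_exp_iff.mpr (by linarith)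
    linarith
  have hD : Dg s ≤ 21/19 := by
    have := Dg_upper hs3
    nlinarith [hei]
  have hDpos := Dg_pos hs
  have hN := Ng_lower hs
  -- R ≥ (2 e^{-s}) / (21/19) = (38/21) e^{-s}
  have hR : (38/21) * Real.exp (-s) ≤ Ng s / Dg s := by
    rw [le_div_iff₀ hDpos]
    nlinarith [hN, hD, heipos]
  -- 1/(e^{2s}-1) ≤ (38/21) e^{-s}
  have hfin : 1 / (Real.exp (2*s) - 1) ≤ (38/21) * Real.exp (-s) := by
    rw [div_le_iff₀ hE]
    have hprod : Real.exp (-s) * Real.exp (2*s) = Real.exp s := by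
      rw [← Real.exp_add]; ring_nf
    nlinarith [hprod, he20, hei, heipos]
  linarith

lemma main_bound {t : ℝ} (ht : 0 < t) :
    Ng t / Dg t ≤ 1/(2*t) * (1 - (2*π^2/t) / (Real.exp (2*π^2/t) - 1)) := by
  by_cases h3 : 3 ≤ t
  · exact direct_upper h3
  · push_neg at h3
    have hπ2 := pi_sq_gt
    set s := π^2 * t⁻¹ with hsdef
    have hs0 : 0 < s := by positivity
    have hs3 : 3 ≤ s := by
      rw [hsdef, ← div_eq_mul_inv, le_div_iff₀ ht]
      nlinarith
    have hDL := direct_lower hs3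
    rw [Ng_ratio ht]
    have harg : 2*π^2/t = 2*s := by
      rw [hsdef]; field_simp
    rw [harg]
    have hc : (0:ℝ) < π^2/t^2 := by positivity
    have hstep := mul_le_mul_of_nonneg_left hDL hc.le
    have hE : 0 < Real.exp (2*s) - 1 := by
      have : (1:ℝ) < Real.exp (2*s) := Real.one_lt_exp_iff.mpr (by linarith)
      linarith
    have hid : ∀ E : ℝ, E ≠ 0 → 1/(2*t) * (1 - (2*s)/E)
        = 1/(2*t) - π^2/t^2 * (1/E) := by
      intro E hEne
      rw [hsdef]
      field_simp
    rw [hid _ hE.ne']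
    have h1 : π^2/t^2 * (1/(Real.exp (2*s) - 1))
        = π^2/t^2 * (Real.exp (2*s) - 1)⁻¹ := by rw [one_div]
    nlinarith [hstep]

/-- the variance of the discrete Gaussian `N_ℤ(0, σ²)` is at most
`σ²(1 − 4π²σ²/(e^{4π²σ²} − 1))`, which is strictly less than `σ²`. -/
theorem discreteGaussian_variance_lt (σ : ℝ) (hσ : 0 < σ) :
    (∑' x : ℤ, (x : ℝ) ^ 2 * Real.exp (-(x : ℝ) ^ 2 / (2 * σ ^ 2))) /
        (∑' y : ℤ, Real.exp (-(y : ℝ) ^ 2 / (2 * σ ^ 2))) ≤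
      σ ^ 2 * (1 - 4 * π ^ 2 * σ ^ 2 / (Real.exp (4 * π ^ 2 * σ ^ 2) - 1)) ∧
    σ ^ 2 * (1 - 4 * π ^ 2 * σ ^ 2 / (Real.exp (4 * π ^ 2 * σ ^ 2) - 1)) < σ ^ 2 := by
  have hσ2 : (0:ℝ) < σ^2 := by positivity
  set t : ℝ := (2*σ^2)⁻¹ with htdef
  have ht : 0 < t := by positivity
  constructor
  · have hmb := main_bound ht
    have harg : ∀ n : ℤ, -(n:ℝ)^2 / (2*σ^2) = -t * (n:ℝ)^2 := by
      intro n; rw [htdef]; ring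
    have e1 : (∑' x : ℤ, (x:ℝ)^2 * Real.exp (-(x:ℝ)^2 / (2*σ^2))) = Ng t := by
      rw [Ng]; exact tsum_congr fun n => by rw [harg n]
    have e2 : (∑' y : ℤ, Real.exp (-(y:ℝ)^2 / (2*σ^2))) = Dg t := by
      rw [Dg]; exact tsum_congr fun n => by rw [harg n]
    rw [e1, e2]
    have ha : 2*π^2/t = 4*π^2*σ^2 := by
      rw [htdef]; field_simp; ring
    have hb : 1/(2*t) = σ^2 := by
      rw [htdef]; field_simp
    rw [ha, hb] at hmb
    calc Ng t / Dg t ≤ σ^2 * (1 - 4*π^2*σ^2 / (Real.exp (4*π^2*σ^2) - 1)) := hmb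
      _ = σ^2 * (1 - 4*π^2*σ^2 / (Real.exp (4*π^2*σ^2) - 1)) := rfl
  · have hx : (0:ℝ) < 4*π^2*σ^2 := by positivity
    have he : (1:ℝ) < Real.exp (4*π^2*σ^2) := Real.one_lt_exp_iff.mpr hx
    have hq : (0:ℝ) < 4*π^2*σ^2 / (Real.exp (4*π^2*σ^2) - 1) :=
      div_pos hx (by linarith)
    nlinarith [hσ2, hq]
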